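/- Let H ∈ (0,1), r ≥ 1, and let a₀, …, a_q be real numbers satisfying Σ_{k=0}^q a_k k^i = 0 for every i = 0, 1, …, r−1 (a filter of order r). If H ∈ (0, 3/4) or r ≥ 2, then Σ_{n=1}^∞ ρ_H^a(n)² < ∞, where ρ_H^a(n) = −(1/2) Σ_{k=0}^q Σ_{j=0}^q a_k a_j |n + k − j|^{2H}. -/

import Mathlib

open Real

namespace FBM

open Polynomial Finset

noncomputable def g (p : ℝ) : ℝ → ℝ := fun t => t ^ p

def dplus (h : ℝ → ℝ) : ℝ → ℝ := fun t => h (t + 1) - h t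
def dminus (h : ℝ → ℝ) : ℝ → ℝ := fun t => h (t - 1) - h t
lemma dplus_iter_const_mul (c : ℝ) (F : ℝ → ℝ) (i : ℕ) :
    dplus^[i] (fun t => c * F t) = fun t => c * dplus^[i] F t := by
  induction i with
  | zero => simp
  | succ i ih =>
    rw [Function.iterate_succ_apply', Function.iterate_succ_apply', ih]
    funext t; simp [dplus]; ring

lemma dminus_iter_const_mul (c : ℝ) (F : ℝ → ℝ) (i : ℕ) :
    dminus^[i] (fun t => c * F t) = fun t => c * dminus^[i] F t := by
  induction i with
  | zero => simp
  | succ i ih =>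
    rw [Function.iterate_succ_apply', Function.iterate_succ_apply', ih]
    funext t; simp [dminus]; ring

lemma hasDerivAt_dplus_iter (i : ℕ) (h h' : ℝ → ℝ) (T : ℝ)
    (hd : ∀ s, T < s → HasDerivAt h (h' s) s) :
    ∀ t, T < t → HasDerivAt (dplus^[i] h) (dplus^[i] h' t) t := by
  induction i with
  | zero => simpa using hd
  | succ i ih =>
    intro t ht
    rw [Function.iterate_succ_apply', Function.iterate_succ_apply']
    exact ((ih (t + 1) (by linarith)).comp_add_const t 1).sub (ih t ht)

lemma hasDerivAt_dminus_iter (j : ℕ) (h h' : ℝ → ℝ) (T : ℝ)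
    (hd : ∀ s, T < s → HasDerivAt h (h' s) s) :
    ∀ t, T + j < t → HasDerivAt (dminus^[j] h) (dminus^[j] h' t) t := by
  induction j with
  | zero => intro t ht; simpa using hd t (by simpa using ht)
  | succ j ih =>
    intro t ht
    push_cast at ht
    rw [Function.iterate_succ_apply', Function.iterate_succ_apply']
    have h1 : HasDerivAt (dminus^[j] h) (dminus^[j] h' (t - 1)) (t - 1) :=
      ih (t - 1) (by linarith)
    exact (HasDerivAt.sub (by simpa [sub_eq_add_neg] using h1.comp_add_const t (-1))
      (ih t (by linarith)))

lemma hasDerivAt_g (p : ℝ) {s : ℝ} (hs : 0 < s) :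
    HasDerivAt (g p) (p * g (p - 1) s) s := by
  unfold g; simpa [g, mul_comm] using Real.hasDerivAt_rpow_const (x := s) (p := p) (Or.inl hs.ne')

/-- derivative of `dminus^[j] (g p)` -/
lemma hasDerivAt_dminus_iter_g (j : ℕ) (p : ℝ) :
    ∀ t, (j : ℝ) < t →
      HasDerivAt (dminus^[j] (g p)) (p * dminus^[j] (g (p - 1)) t) t := by
  intro t ht
  have := hasDerivAt_dminus_iter j (g p) (fun s => p * g (p - 1) s) 0
    (fun s hs => hasDerivAt_g p hs) t (by linarith)
  rwa [dminus_iter_const_mul] at this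

/-- derivative of `dplus^[i] (dminus^[j] (g p))` -/
lemma hasDerivAt_mix (i j : ℕ) (p : ℝ) :
    ∀ t, (j : ℝ) < t →
      HasDerivAt (dplus^[i] (dminus^[j] (g p)))
        (p * dplus^[i] (dminus^[j] (g (p - 1))) t) t := by
  intro t ht
  have := hasDerivAt_dplus_iter i (dminus^[j] (g p))
    (fun s => p * dminus^[j] (g (p - 1)) s) (j : ℝ)
    (fun s hs => hasDerivAt_dminus_iter_g j p s hs) t ht
  rwa [dplus_iter_const_mul] at this

lemma ratio_rpow {t c e : ℝ} (hc : 0 < c) (h1 : t / 2 ≤ c) (h2 : c ≤ 2 * t) :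
    c ^ e ≤ 2 ^ |e| * t ^ e := by
  have ht : 0 < t := by nlinarith
  rcases le_or_gt 0 e with he | he
  · calc c ^ e ≤ (2 * t) ^ e := Real.rpow_le_rpow hc.le h2 he
      _ = 2 ^ e * t ^ e := Real.mul_rpow (by norm_num) ht.le
      _ ≤ 2 ^ |e| * t ^ e := by
          have := Real.rpow_le_rpow_of_exponent_le one_le_two (le_abs_self e)
          have := (Real.rpow_pos_of_pos ht e).le
          nlinarith
  · have h3 : (0:ℝ) < t / 2 := by linarith
    calc c ^ e ≤ (t / 2) ^ e := Real.rpow_le_rpow_of_nonpos h3 h1 he.le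
      _ = t ^ e * (1 / 2 : ℝ) ^ e := by
          rw [div_eq_mul_one_div, Real.mul_rpow ht.le (by norm_num)]
      _ = 2 ^ (-e) * t ^ e := by
          rw [Real.rpow_neg (by norm_num), ← Real.inv_rpow (by norm_num)]
          ring_nf
      _ = 2 ^ |e| * t ^ e := by rw [abs_of_neg he]
lemma mvt_plus (h h' : ℝ → ℝ) (t : ℝ)
    (hd : ∀ s ∈ Set.Icc t (t + 1), HasDerivAt h (h' s) s) :
    ∃ c ∈ Set.Ioo t (t + 1), dplus h t = h' c := by
  obtain ⟨c, hc, hc2⟩ := exists_hasDerivAt_eq_slope h h' (by linarith : t < t + 1)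
    (fun s hs => (hd s hs).continuousAt.continuousWithinAt)
    (fun s hs => hd s (Set.Ioo_subset_Icc_self hs))
  exact ⟨c, hc, by simpa [dplus] using hc2.symm⟩

lemma mvt_minus (h h' : ℝ → ℝ) (t : ℝ)
    (hd : ∀ s ∈ Set.Icc (t - 1) t, HasDerivAt h (h' s) s) :
    ∃ c ∈ Set.Ioo (t - 1) t, dminus h t = -h' c := by
  obtain ⟨c, hc, hc2⟩ := exists_hasDerivAt_eq_slope h h' (by linarith : t - 1 < t)
    (fun s hs => (hd s hs).continuousAt.continuousWithinAt)
    (fun s hs => hd s (Set.Ioo_subset_Icc_self hs))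
  refine ⟨c, hc, ?_⟩
  have : h' c = h t - h (t - 1) := by simpa using hc2
  simp [dminus, this]
lemma bound_minus (j : ℕ) (p : ℝ) :
    ∃ C, 0 ≤ C ∧ ∃ T : ℝ, 1 ≤ T ∧ ∀ t, T ≤ t →
      |dminus^[j] (g p) t| ≤ C * t ^ (p - j) := by
  induction j generalizing p with
  | zero =>
    refine ⟨1, zero_le_one, 1, le_rfl, fun t ht => ?_⟩
    have h0 : (0:ℝ) < t := by linarith
    simp [g, abs_of_nonneg (Real.rpow_nonneg h0.le p)]
  | succ j ih =>
    obtain ⟨C, hC, T, hT, hb⟩ := ih (p - 1)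
    refine ⟨|p| * C * 2 ^ |p - 1 - j|, by positivity, max (T + 1) ((j:ℝ) + 2),
      le_trans (by linarith) (le_max_left _ _), fun t ht => ?_⟩
    have ht1 : T + 1 ≤ t := (le_max_left _ _).trans ht
    have ht2 : (j:ℝ) + 2 ≤ t := (le_max_right _ _).trans ht
    rw [Function.iterate_succ_apply']
    obtain ⟨c, hc, heq⟩ := mvt_minus (dminus^[j] (g p))
      (fun s => p * dminus^[j] (g (p - 1)) s) t
      (fun s hs => hasDerivAt_dminus_iter_g j p s (by
        have := hs.1; simp only [Set.mem_Icc] at hs; linarith [hs.1]))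
    rw [heq, abs_neg, abs_mul]
    have hcT : T ≤ c := by linarith [hc.1]
    have h1 : |dminus^[j] (g (p-1)) c| ≤ C * c ^ (p - 1 - j) := hb c hcT
    have hcpos : (0:ℝ) < c := by linarith [hc.1]
    have h2 : c ^ (p - 1 - j) ≤ 2 ^ |p - 1 - j| * t ^ (p - 1 - j) :=
      ratio_rpow hcpos (by linarith [hc.1]) (by linarith [hc.2])
    have h3 : p - 1 - (j:ℝ) = p - ((j:ℕ)+1:ℝ) := by ring
    calc |p| * |dminus^[j] (g (p-1)) c| ≤ |p| * (C * c ^ (p - 1 - j)) := by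
          exact mul_le_mul_of_nonneg_left h1 (abs_nonneg p)
      _ ≤ |p| * (C * (2 ^ |p - 1 - j| * t ^ (p - 1 - j))) := by
          have := mul_le_mul_of_nonneg_left h2 hC
          exact mul_le_mul_of_nonneg_left this (abs_nonneg p)
      _ = |p| * C * 2 ^ |p - 1 - j| * t ^ (p - ((j:ℕ)+1:ℝ)) := by rw [← h3]; ring
      _ = |p| * C * 2 ^ |p - 1 - j| * t ^ (p - ((j+1 : ℕ):ℝ)) := by push_cast; ring_nf

lemma bound_mix (i j : ℕ) (p : ℝ) :
    ∃ C, 0 ≤ C ∧ ∃ T : ℝ, 1 ≤ T ∧ ∀ t, T ≤ t →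
      |dplus^[i] (dminus^[j] (g p)) t| ≤ C * t ^ (p - i - j) := by
  induction i generalizing p with
  | zero =>
    obtain ⟨C, hC, T, hT, hb⟩ := bound_minus j p
    refine ⟨C, hC, T, hT, fun t ht => ?_⟩
    simpa using hb t ht
  | succ i ih =>
    obtain ⟨C, hC, T, hT, hb⟩ := ih (p - 1)
    refine ⟨|p| * C * 2 ^ |p - 1 - i - j|, by positivity, max T ((i:ℝ) + (j:ℝ) + 2),
      hT.trans (le_max_left _ _), fun t ht => ?_⟩
    have ht1 : T ≤ t := (le_max_left _ _).trans ht
    have ht2 : (i:ℝ) + (j:ℝ) + 2 ≤ t := (le_max_right _ _).trans ht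
    rw [Function.iterate_succ_apply']
    obtain ⟨c, hc, heq⟩ := mvt_plus (dplus^[i] (dminus^[j] (g p)))
      (fun s => p * dplus^[i] (dminus^[j] (g (p - 1))) s) t
      (fun s hs => hasDerivAt_mix i j p s (by
        simp only [Set.mem_Icc] at hs; linarith [hs.1]))
    rw [heq, abs_mul]
    have hcT : T ≤ c := by linarith [hc.1]
    have h1 : |dplus^[i] (dminus^[j] (g (p-1))) c| ≤ C * c ^ (p - 1 - i - j) := hb c hcT
    have hcpos : (0:ℝ) < c := by linarith [hc.1]
    have h2 : c ^ (p - 1 - i - j) ≤ 2 ^ |p - 1 - i - j| * t ^ (p - 1 - i - j) :=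
      ratio_rpow hcpos (by linarith [hc.1]) (by linarith [hc.2])
    have h3 : p - 1 - (i:ℝ) - j = p - ((i+1 : ℕ):ℝ) - j := by push_cast; ring
    calc |p| * |dplus^[i] (dminus^[j] (g (p-1))) c|
        ≤ |p| * (C * c ^ (p - 1 - i - j)) := mul_le_mul_of_nonneg_left h1 (abs_nonneg p)
      _ ≤ |p| * (C * (2 ^ |p - 1 - i - j| * t ^ (p - 1 - i - j))) :=
          mul_le_mul_of_nonneg_left (mul_le_mul_of_nonneg_left h2 hC) (abs_nonneg p)
      _ = |p| * C * 2 ^ |p - 1 - i - j| * t ^ (p - 1 - (i:ℝ) - j) := by ring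
      _ = |p| * C * 2 ^ |p - 1 - i - j| * t ^ (p - ((i+1 : ℕ):ℝ) - j) := by rw [h3]

noncomputable def Lp (P : ℝ[X]) (G : ℝ → ℝ) (x : ℝ) : ℝ := P.sum fun k c => c * G (x + k)
noncomputable def Lm (P : ℝ[X]) (G : ℝ → ℝ) (x : ℝ) : ℝ := P.sum fun k c => c * G (x - k)

lemma Lp_eq (P : ℝ[X]) (G : ℝ → ℝ) (x : ℝ) {N : ℕ} (hN : P.natDegree < N) :
    Lp P G x = ∑ k ∈ range N, P.coeff k * G (x + k) :=
  Polynomial.sum_over_range' P (fun k => by simp) N hN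

lemma Lm_eq (P : ℝ[X]) (G : ℝ → ℝ) (x : ℝ) {N : ℕ} (hN : P.natDegree < N) :
    Lm P G x = ∑ k ∈ range N, P.coeff k * G (x - k) :=
  Polynomial.sum_over_range' P (fun k => by simp) N hN

lemma Lp_add (P Q : ℝ[X]) (G : ℝ → ℝ) (x : ℝ) :
    Lp (P + Q) G x = Lp P G x + Lp Q G x :=
  Polynomial.sum_add_index P Q _ (fun k => by simp) (fun k b c => by rw [add_mul])

lemma Lm_add (P Q : ℝ[X]) (G : ℝ → ℝ) (x : ℝ) :
    Lm (P + Q) G x = Lm P G x + Lm Q G x :=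
  Polynomial.sum_add_index P Q _ (fun k => by simp) (fun k b c => by rw [add_mul])

lemma Lp_monomial (n : ℕ) (c : ℝ) (G : ℝ → ℝ) (x : ℝ) :
    Lp (monomial n c) G x = c * G (x + n) :=
  Polynomial.sum_monomial_index c _ (by simp)

lemma Lm_monomial (n : ℕ) (c : ℝ) (G : ℝ → ℝ) (x : ℝ) :
    Lm (monomial n c) G x = c * G (x - n) :=
  Polynomial.sum_monomial_index c _ (by simp)

lemma Lp_step (P : ℝ[X]) (G : ℝ → ℝ) (x : ℝ) :
    Lp ((X - 1) * P) G x = Lp P (dplus G) x := by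
  induction P using Polynomial.induction_on' with
  | add p q hp hq => rw [mul_add, Lp_add, Lp_add, hp, hq]
  | monomial n c =>
    rw [sub_mul, one_mul, X_mul_monomial]
    have : ((monomial (n+1) c : ℝ[X]) - monomial n c) = monomial (n+1) c + monomial n (-c) := by
      simp [sub_eq_add_neg, monomial_neg]
    rw [this, Lp_add, Lp_monomial, Lp_monomial, Lp_monomial]
    have harg : x + ((n:ℝ) + 1) = (x + n) + 1 := by ring
    push_cast
    rw [harg]
    simp [dplus]
    ring

lemma Lm_step (P : ℝ[X]) (G : ℝ → ℝ) (x : ℝ) :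
    Lm ((X - 1) * P) G x = Lm P (dminus G) x := by
  induction P using Polynomial.induction_on' with
  | add p q hp hq => rw [mul_add, Lm_add, Lm_add, hp, hq]
  | monomial n c =>
    rw [sub_mul, one_mul, X_mul_monomial]
    have : ((monomial (n+1) c : ℝ[X]) - monomial n c) = monomial (n+1) c + monomial n (-c) := by
      simp [sub_eq_add_neg, monomial_neg]
    rw [this, Lm_add, Lm_monomial, Lm_monomial, Lm_monomial]
    have harg : x - ((n:ℝ) + 1) = (x - n) - 1 := by ring
    push_cast
    rw [harg]
    simp [dminus]
    ring

lemma Lp_pow (r : ℕ) (P : ℝ[X]) (G : ℝ → ℝ) (x : ℝ) :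
    Lp ((X - 1) ^ r * P) G x = Lp P (dplus^[r] G) x := by
  induction r generalizing P G with
  | zero => simp
  | succ r ih =>
    have h1 : ((X:ℝ[X]) - 1) ^ (r+1) * P = (X - 1) ^ r * ((X - 1) * P) := by ring
    rw [h1, ih, Lp_step, Function.iterate_succ_apply']

lemma Lm_pow (r : ℕ) (P : ℝ[X]) (G : ℝ → ℝ) (x : ℝ) :
    Lm ((X - 1) ^ r * P) G x = Lm P (dminus^[r] G) x := by
  induction r generalizing P G with
  | zero => simp
  | succ r ih =>
    have h1 : ((X:ℝ[X]) - 1) ^ (r+1) * P = (X - 1) ^ r * ((X - 1) * P) := by ring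
    rw [h1, ih, Lm_step, Function.iterate_succ_apply']

lemma cast_descFactorial (n k : ℕ) :
    (n.descFactorial k : ℝ) = ∏ s ∈ range k, ((n:ℝ) - s) := by
  induction k with
  | zero => simp
  | succ k ih =>
    rw [Nat.descFactorial_succ, prod_range_succ, ← ih]
    rcases le_or_gt k n with h | h
    · push_cast [h]; ring
    · have h1 : n.descFactorial k = 0 := Nat.descFactorial_eq_zero_iff_lt.2 h
      have h2 : n.descFactorial (k+1) = 0 := Nat.descFactorial_eq_zero_iff_lt.2 (h.trans (Nat.lt_succ_self k))
      rw [Nat.descFactorial_succ] at h2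
      simp [h1, h2]

noncomputable def Apoly (q : ℕ) (a : ℕ → ℝ) : ℝ[X] := ∑ k ∈ range (q+1), C (a k) * X ^ k

lemma Apoly_natDegree (q : ℕ) (a : ℕ → ℝ) : (Apoly q a).natDegree < q + 1 := by
  have : (Apoly q a).natDegree ≤ q :=
    natDegree_sum_le_of_forall_le _ _ (fun k hk => by
      calc (C (a k) * X ^ k).natDegree ≤ (X ^ k : ℝ[X]).natDegree := natDegree_C_mul_le _ _
        _ = k := natDegree_X_pow k
        _ ≤ q := by simpa [Nat.lt_succ_iff] using hk)
  omega

lemma Apoly_coeff (q : ℕ) (a : ℕ → ℝ) (k : ℕ) (hk : k < q + 1) :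
    (Apoly q a).coeff k = a k := by
  rw [Apoly, finset_sum_coeff]
  rw [Finset.sum_eq_single k]
  · simp
  · intro b _ hb; simp [coeff_C_mul, coeff_X_pow, Ne.symm hb]
  · intro h; exact absurd (mem_range.2 hk) h

/-- the filter kills evaluation of low-degree polynomials -/
lemma filter_eval {r q : ℕ} {a : ℕ → ℝ}
    (ha : ∀ i : ℕ, i < r → ∑ k ∈ range (q+1), a k * (k:ℝ) ^ i = 0)
    (Q : ℝ[X]) (hQ : Q.natDegree < r) :
    ∑ k ∈ range (q+1), a k * Q.eval (k:ℝ) = 0 := by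
  have h1 : ∀ k : ℕ, a k * Q.eval (k:ℝ)
      = ∑ i ∈ range (Q.natDegree + 1), Q.coeff i * (a k * (k:ℝ) ^ i) := by
    intro k
    rw [Polynomial.eval_eq_sum_range, Finset.mul_sum]
    exact Finset.sum_congr rfl (fun i _ => by ring)
  rw [Finset.sum_congr rfl (fun k _ => h1 k), Finset.sum_comm]
  refine Finset.sum_eq_zero (fun i hi => ?_)
  rw [← Finset.mul_sum, ha i (by simp only [mem_range] at hi; omega), mul_zero]

lemma dvd_Apoly {r q : ℕ} {a : ℕ → ℝ}
    (ha : ∀ i : ℕ, i < r → ∑ k ∈ range (q+1), a k * (k:ℝ) ^ i = 0) (hr : 1 ≤ r) :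
    ((X : ℝ[X]) - 1) ^ r ∣ Apoly q a := by
  by_cases hA : Apoly q a = 0
  · rw [hA]; exact dvd_zero _
  have hroot : ∀ m, m ≤ r - 1 → (derivative^[m] (Apoly q a)).IsRoot 1 := by
    intro m hm
    have hmr : m < r := by omega
    have hev : (derivative^[m] (Apoly q a)).eval 1
        = ∑ k ∈ range (q+1), a k * (k.descFactorial m : ℝ) := by
      rw [Apoly, Polynomial.iterate_derivative_sum, Polynomial.eval_finset_sum]
      refine Finset.sum_congr rfl (fun k _ => ?_)
      rw [Polynomial.iterate_derivative_C_mul, Polynomial.iterate_derivative_X_pow_eq_C_mul]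
      simp [mul_comm]
    have hQ : ∀ k : ℕ, (k.descFactorial m : ℝ)
        = (∏ s ∈ range m, ((X : ℝ[X]) - C (s:ℝ))).eval (k:ℝ) := by
      intro k
      rw [cast_descFactorial, Polynomial.eval_prod]
      exact Finset.prod_congr rfl (fun s _ => by simp)
    have hdeg : (∏ s ∈ range m, ((X : ℝ[X]) - C (s:ℝ))).natDegree < r := by
      have : (∏ s ∈ range m, ((X : ℝ[X]) - C (s:ℝ))).natDegree ≤ m :=
        (natDegree_prod_le _ _).trans (by
          have : ∀ s ∈ range m, ((X : ℝ[X]) - C (s:ℝ)).natDegree = 1 :=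
            fun s _ => natDegree_X_sub_C (s:ℝ)
          rw [Finset.sum_congr rfl this]
          simp)
      omega
    unfold Polynomial.IsRoot
    rw [hev, Finset.sum_congr rfl (fun k _ => by rw [hQ k])]
    exact filter_eval ha _ hdeg
  have hlt : r - 1 < (Apoly q a).rootMultiplicity 1 :=
    Polynomial.lt_rootMultiplicity_of_isRoot_iterate_derivative hA hroot
  have : ((X : ℝ[X]) - C 1) ^ r ∣ Apoly q a :=
    dvd_trans (pow_dvd_pow _ (by omega)) (Polynomial.pow_rootMultiplicity_dvd _ 1)
  simpa using this

lemma dplus_iter_sum_shift (i : ℕ) (s : Finset ℕ) (b : ℕ → ℝ) (F : ℝ → ℝ) :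
    dplus^[i] (fun y => ∑ l ∈ s, b l * F (y - l)) =
      fun y => ∑ l ∈ s, b l * dplus^[i] F (y - l) := by
  induction i generalizing F with
  | zero => simp
  | succ i ih =>
    have h : dplus (fun y => ∑ l ∈ s, b l * F (y - l)) =
        fun y => ∑ l ∈ s, b l * dplus F (y - l) := by
      funext y
      simp only [dplus, ← Finset.sum_sub_distrib]
      refine Finset.sum_congr rfl (fun l _ => ?_)
      have harg : y + 1 - (l:ℝ) = (y - l) + 1 := by ring
      rw [harg]; ring
    rw [Function.iterate_succ_apply, h, ih]
    funext y
    exact Finset.sum_congr rfl (fun l _ => by rw [← Function.iterate_succ_apply])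

end FBM


set_option maxHeartbeats 1000000 in
/-- For a filter `a₀,…,a_q` of order `r ≥ 1`, if `H < 3/4` or `r ≥ 2`, then the
covariances `ρ_H^a(n) = -(1/2) Σ_k Σ_j a_k a_j |n+k-j|^(2H)` of the filtered fBm
observations are square-summable over `n ≥ 1`. -/
theorem filtered_fbm_covariance_square_summable (H : ℝ) (hH : H ∈ Set.Ioo (0:ℝ) 1)
    (r : ℕ) (hr : 1 ≤ r) (q : ℕ) (a : ℕ → ℝ)
    (ha : ∀ i : ℕ, i < r → ∑ k ∈ Finset.range (q+1), a k * (k:ℝ) ^ i = 0)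
    (hcond : H < 3/4 ∨ 2 ≤ r) :
    Summable (fun n : ℕ =>
      (-(1/2) * ∑ k ∈ Finset.range (q+1), ∑ j ∈ Finset.range (q+1),
        a k * a j * |((n:ℝ) + 1) + k - j| ^ (2*H)) ^ 2) := by
  obtain ⟨hH0, hH1⟩ := hH
  obtain ⟨B, hB⟩ := FBM.dvd_Apoly ha hr
  set NB : ℕ := B.natDegree + 1 with hNBdef
  obtain ⟨C, hC, T, hT, hb⟩ := FBM.bound_mix r r (2*H)
  set e : ℝ := 2*H - (r:ℝ) - (r:ℝ) with hedef
  set Fr : ℝ → ℝ := FBM.dminus^[r] (FBM.g (2*H)) with hFrdef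
  set D : ℝ → ℝ := FBM.dplus^[r] Fr with hDdef
  -- the filtered double sum identity
  have hinner : ∀ y : ℝ, ∑ j ∈ Finset.range (q+1), a j * FBM.g (2*H) (y - j)
      = ∑ l ∈ Finset.range NB, B.coeff l * Fr (y - l) := by
    intro y
    have h1 : ∑ j ∈ Finset.range (q+1), a j * FBM.g (2*H) (y - j)
        = FBM.Lm (FBM.Apoly q a) (FBM.g (2*H)) y := by
      rw [FBM.Lm_eq _ _ _ (FBM.Apoly_natDegree q a)]
      exact Finset.sum_congr rfl (fun j hj => by
        rw [FBM.Apoly_coeff q a j (Finset.mem_range.1 hj)])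
    rw [h1, hB, FBM.Lm_pow, FBM.Lm_eq _ _ _ (Nat.lt_succ_self _)]
  have houter : ∀ x : ℝ,
      ∑ k ∈ Finset.range (q+1), a k * ∑ l ∈ Finset.range NB, B.coeff l * Fr ((x + k) - l)
      = ∑ m ∈ Finset.range NB, B.coeff m * ∑ l ∈ Finset.range NB, B.coeff l * D ((x + m) - l) := by
    intro x
    have h1 : ∑ k ∈ Finset.range (q+1), a k * ∑ l ∈ Finset.range NB, B.coeff l * Fr ((x + k) - l)
        = FBM.Lp (FBM.Apoly q a) (fun y => ∑ l ∈ Finset.range NB, B.coeff l * Fr (y - l)) x := by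
      rw [FBM.Lp_eq _ _ _ (FBM.Apoly_natDegree q a)]
      exact Finset.sum_congr rfl (fun k hk => by
        rw [FBM.Apoly_coeff q a k (Finset.mem_range.1 hk)])
    have h3 : FBM.dplus^[r] (fun y => ∑ l ∈ Finset.range NB, B.coeff l * Fr (y - l))
        = fun y => ∑ l ∈ Finset.range NB, B.coeff l * D (y - l) :=
      FBM.dplus_iter_sum_shift r _ _ _
    rw [h1, hB, FBM.Lp_pow, FBM.Lp_eq _ _ _ (Nat.lt_succ_self _)]
    exact Finset.sum_congr rfl (fun m hm => by rw [h3])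
  have hiden : ∀ x : ℝ,
      ∑ k ∈ Finset.range (q+1), ∑ j ∈ Finset.range (q+1), a k * a j * FBM.g (2*H) (x + k - j)
      = ∑ m ∈ Finset.range NB, ∑ l ∈ Finset.range NB, B.coeff m * (B.coeff l * D (x + m - l)) := by
    intro x
    have hkj : ∀ k : ℕ, ∑ j ∈ Finset.range (q+1), a k * a j * FBM.g (2*H) (x + k - j)
        = a k * ∑ l ∈ Finset.range NB, B.coeff l * Fr ((x + k) - l) := by
      intro k
      rw [← hinner ((x : ℝ) + k), Finset.mul_sum]
      exact Finset.sum_congr rfl (fun j _ => by ring)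
    rw [Finset.sum_congr rfl (fun k _ => hkj k), houter x]
    exact Finset.sum_congr rfl (fun m _ => by rw [Finset.mul_sum])
  set n0 : ℕ := q + 2*NB + ⌈T⌉₊ + 2 with hn0def
  set K : ℝ := (1/2) * (∑ l ∈ Finset.range NB, |B.coeff l|)^2 * (C * (2 ^ |e| * 1)) with hKdef
  have hKbase : (0:ℝ) ≤ (∑ l ∈ Finset.range NB, |B.coeff l|)^2 * (C * 2 ^ |e|) := by positivity
  -- the key pointwise bound
  have key : ∀ n : ℕ, n0 ≤ n →
      (-(1/2) * ∑ k ∈ Finset.range (q+1), ∑ j ∈ Finset.range (q+1),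
        a k * a j * |((n:ℝ) + 1) + k - j| ^ (2*H)) ^ 2 ≤ K^2 * ((n:ℝ) ^ e * (n:ℝ) ^ e) := by
    intro n hn
    have hnn : (q:ℝ) + 2*(NB:ℝ) + (⌈T⌉₊:ℝ) + 2 ≤ (n:ℝ) := by exact_mod_cast hn
    have hTc : T ≤ (⌈T⌉₊:ℝ) := Nat.le_ceil T
    have hNB0 : (0:ℝ) ≤ NB := Nat.cast_nonneg NB
    have hq0 : (0:ℝ) ≤ q := Nat.cast_nonneg q
    have hsum_eq : ∑ k ∈ Finset.range (q+1), ∑ j ∈ Finset.range (q+1),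
        a k * a j * |((n:ℝ) + 1) + k - j| ^ (2*H)
        = ∑ m ∈ Finset.range NB, ∑ l ∈ Finset.range NB,
            B.coeff m * (B.coeff l * D (((n:ℝ) + 1) + m - l)) := by
      rw [← hiden ((n:ℝ) + 1)]
      refine Finset.sum_congr rfl (fun k hk => Finset.sum_congr rfl (fun j hj => ?_))
      have hj' : (j:ℝ) ≤ q := by
        exact_mod_cast Nat.lt_succ_iff.1 (Finset.mem_range.1 hj)
      have hk0 : (0:ℝ) ≤ k := Nat.cast_nonneg k
      have hpos : 0 < ((n:ℝ) + 1) + k - j := by linarith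
      rw [abs_of_pos hpos]
      rfl
    have hDb : ∀ m ∈ Finset.range NB, ∀ l ∈ Finset.range NB,
        |D (((n:ℝ) + 1) + m - l)| ≤ C * (2 ^ |e| * (n:ℝ) ^ e) := by
      intro m hm l hl
      have hm' : (m:ℝ) + 1 ≤ NB := by exact_mod_cast Finset.mem_range.1 hm
      have hl' : (l:ℝ) + 1 ≤ NB := by exact_mod_cast Finset.mem_range.1 hl
      have hm0 : (0:ℝ) ≤ m := Nat.cast_nonneg m
      have hl0 : (0:ℝ) ≤ l := Nat.cast_nonneg l
      have hTt : T ≤ ((n:ℝ) + 1) + m - l := by linarith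
      have h1 := hb _ hTt
      have hratio : (((n:ℝ) + 1) + m - l) ^ e ≤ 2 ^ |e| * (n:ℝ) ^ e :=
        FBM.ratio_rpow (by linarith) (by linarith) (by linarith)
      calc |D (((n:ℝ) + 1) + m - l)| ≤ C * (((n:ℝ) + 1) + m - l) ^ e := h1
        _ ≤ C * (2 ^ |e| * (n:ℝ) ^ e) := mul_le_mul_of_nonneg_left hratio hC
    have habs : |∑ m ∈ Finset.range NB, ∑ l ∈ Finset.range NB,
        B.coeff m * (B.coeff l * D (((n:ℝ) + 1) + m - l))|
        ≤ (∑ l ∈ Finset.range NB, |B.coeff l|)^2 * (C * (2 ^ |e| * (n:ℝ) ^ e)) := by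
      set c : ℝ := C * (2 ^ |e| * (n:ℝ) ^ e) with hcdef
      calc |∑ m ∈ Finset.range NB, ∑ l ∈ Finset.range NB,
            B.coeff m * (B.coeff l * D (((n:ℝ) + 1) + m - l))|
          ≤ ∑ m ∈ Finset.range NB, |∑ l ∈ Finset.range NB,
            B.coeff m * (B.coeff l * D (((n:ℝ) + 1) + m - l))| :=
            Finset.abs_sum_le_sum_abs _ _
        _ ≤ ∑ m ∈ Finset.range NB, ∑ l ∈ Finset.range NB,
            |B.coeff m * (B.coeff l * D (((n:ℝ) + 1) + m - l))| :=
            Finset.sum_le_sum (fun m _ => Finset.abs_sum_le_sum_abs _ _)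
        _ ≤ ∑ m ∈ Finset.range NB, ∑ l ∈ Finset.range NB, |B.coeff m| * (|B.coeff l| * c) := by
            refine Finset.sum_le_sum (fun m hm => Finset.sum_le_sum (fun l hl => ?_))
            rw [abs_mul, abs_mul]
            exact mul_le_mul_of_nonneg_left
              (mul_le_mul_of_nonneg_left (hDb m hm l hl) (abs_nonneg _)) (abs_nonneg _)
        _ = (∑ l ∈ Finset.range NB, |B.coeff l|)^2 * c := by
            have hin : ∀ m : ℕ, ∑ l ∈ Finset.range NB, |B.coeff m| * (|B.coeff l| * c)
                = |B.coeff m| * ((∑ l ∈ Finset.range NB, |B.coeff l|) * c) := fun m => by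
              rw [← Finset.mul_sum, ← Finset.sum_mul]
            rw [Finset.sum_congr rfl (fun m _ => hin m), ← Finset.sum_mul]
            ring
    have hrho : |(-(1/2) * ∑ k ∈ Finset.range (q+1), ∑ j ∈ Finset.range (q+1),
        a k * a j * |((n:ℝ) + 1) + k - j| ^ (2*H))| ≤ K * (n:ℝ) ^ e := by
      rw [abs_mul, hsum_eq]
      have h12 : |(-(1/2) : ℝ)| = 1/2 := by norm_num
      rw [h12]
      calc (1/2 : ℝ) * |∑ m ∈ Finset.range NB, ∑ l ∈ Finset.range NB,
            B.coeff m * (B.coeff l * D (((n:ℝ) + 1) + m - l))|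
          ≤ (1/2) * ((∑ l ∈ Finset.range NB, |B.coeff l|)^2 * (C * (2 ^ |e| * (n:ℝ) ^ e))) :=
            mul_le_mul_of_nonneg_left habs (by norm_num)
        _ = K * (n:ℝ) ^ e := by rw [hKdef]; ring
    calc (-(1/2) * ∑ k ∈ Finset.range (q+1), ∑ j ∈ Finset.range (q+1),
          a k * a j * |((n:ℝ) + 1) + k - j| ^ (2*H)) ^ 2
        = |(-(1/2) * ∑ k ∈ Finset.range (q+1), ∑ j ∈ Finset.range (q+1),
          a k * a j * |((n:ℝ) + 1) + k - j| ^ (2*H))| ^ 2 := (sq_abs _).symm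
      _ ≤ (K * (n:ℝ) ^ e) ^ 2 := by
          exact pow_le_pow_left₀ (abs_nonneg _) hrho 2
      _ = K^2 * ((n:ℝ) ^ e * (n:ℝ) ^ e) := by ring
  -- summability of the comparison series
  have h2e : e + e < -1 := by
    rcases hcond with h34 | hr2
    · have h1r : (1:ℝ) ≤ r := by exact_mod_cast hr
      rw [hedef]; linarith
    · have h2r : (2:ℝ) ≤ r := by exact_mod_cast hr2
      rw [hedef]; linarith
  have hsum0 : Summable (fun n : ℕ => K^2 * ((n:ℝ)) ^ (e + e)) :=
    (Real.summable_nat_rpow.2 h2e).mul_left _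
  have hsum1 : Summable (fun n : ℕ => K^2 * (((n + n0 : ℕ)):ℝ) ^ (e + e)) :=
    (summable_nat_add_iff n0).2 hsum0
  rw [← summable_nat_add_iff n0]
  refine Summable.of_nonneg_of_le (fun n => sq_nonneg _) (fun n => ?_) hsum1
  have hpos : (0:ℝ) < ((n + n0 : ℕ):ℝ) := by
    have : 0 < n + n0 := by omega
    exact_mod_cast this
  rw [Real.rpow_add hpos]
  exact key (n + n0) (Nat.le_add_left n0 n)
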